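/- Let μ₀ be the density of N(0,σ²) and μ₁ the density of N(1,σ²). Then for all z ≥ 1, |μ₀(z) − μ₁(z)| ≤ z·μ₁(z)/σ², and for all z ≤ 0, |μ₀(z) − μ₁(z)| ≤ (1−z)·μ₀(z)/σ². -/

import Mathlib

open MeasureTheory Real

/-- Density of the Gaussian `N(m, σ²)` on `ℝ`. -/
noncomputable def gaussianDensity (σ m z : ℝ) : ℝ :=
  (1 / (σ * Real.sqrt (2 * Real.pi))) * Real.exp (-((z - m) ^ 2) / (2 * σ ^ 2))

lemma one_sub_exp_neg_le (x : ℝ) : 1 - Real.exp (-x) ≤ x := by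
  linarith [Real.add_one_le_exp (-x)]

/-- Tail bounds on the difference of the two Gaussian densities:
for `z ≥ 1`, `|μ₀(z) − μ₁(z)| ≤ z·μ₁(z)/σ²`, and for `z ≤ 0`,
`|μ₀(z) − μ₁(z)| ≤ (1−z)·μ₀(z)/σ²`. -/
theorem density_diff_tail_bounds (σ : ℝ) (hσ : 0 < σ) :
    (∀ z : ℝ, 1 ≤ z →
      |gaussianDensity σ 0 z - gaussianDensity σ 1 z|
        ≤ z * gaussianDensity σ 1 z / σ ^ 2) ∧
    (∀ z : ℝ, z ≤ 0 →
      |gaussianDensity σ 0 z - gaussianDensity σ 1 z|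
        ≤ (1 - z) * gaussianDensity σ 0 z / σ ^ 2) := by
  have hσ2 : (0:ℝ) < σ ^ 2 := by positivity
  have hπ := Real.pi_pos
  have hc : 0 < 1 / (σ * Real.sqrt (2 * Real.pi)) := by positivity
  set c := 1 / (σ * Real.sqrt (2 * Real.pi)) with hcdef
  constructor
  · intro z hz
    set t := (2 * z - 1) / (2 * σ ^ 2) with htdef
    have ht : 0 ≤ t := by
      apply div_nonneg <;> nlinarith
    have hab : Real.exp (-((z - 0) ^ 2) / (2 * σ ^ 2))
        = Real.exp (-((z - 1) ^ 2) / (2 * σ ^ 2)) * Real.exp (-t) := by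
      rw [← Real.exp_add]
      congr 1
      rw [htdef]
      field_simp
      ring
    set b := Real.exp (-((z - 1) ^ 2) / (2 * σ ^ 2)) with hbdef
    have hb : 0 < b := Real.exp_pos _
    have hdiff : gaussianDensity σ 0 z - gaussianDensity σ 1 z
        = c * b * (Real.exp (-t) - 1) := by
      simp only [gaussianDensity, hab, ← hcdef, ← hbdef]; ring
    rw [hdiff, abs_of_nonpos (mul_nonpos_of_nonneg_of_nonpos (by positivity) (by linarith [Real.exp_le_one_iff.mpr (neg_nonpos.mpr ht)]))]
    have h1 : 1 - Real.exp (-t) ≤ t := one_sub_exp_neg_le t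
    have h2 : t ≤ z / σ ^ 2 := by
      rw [htdef, div_le_div_iff₀ (by positivity) hσ2]; nlinarith
    have : -(c * b * (Real.exp (-t) - 1)) = c * b * (1 - Real.exp (-t)) := by ring
    rw [this]
    have hle : c * b * (1 - Real.exp (-t)) ≤ c * b * (z / σ ^ 2) := by
      apply mul_le_mul_of_nonneg_left (le_trans h1 h2) (by positivity)
    calc c * b * (1 - Real.exp (-t)) ≤ c * b * (z / σ ^ 2) := hle
      _ = z * gaussianDensity σ 1 z / σ ^ 2 := by
          simp only [gaussianDensity, ← hcdef, ← hbdef]; ring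
  · intro z hz
    set t := (1 - 2 * z) / (2 * σ ^ 2) with htdef
    have ht : 0 ≤ t := by
      apply div_nonneg <;> nlinarith
    have hab : Real.exp (-((z - 1) ^ 2) / (2 * σ ^ 2))
        = Real.exp (-((z - 0) ^ 2) / (2 * σ ^ 2)) * Real.exp (-t) := by
      rw [← Real.exp_add]
      congr 1
      rw [htdef]
      field_simp
      ring
    set a := Real.exp (-((z - 0) ^ 2) / (2 * σ ^ 2)) with hadef
    have ha : 0 < a := Real.exp_pos _
    have hdiff : gaussianDensity σ 0 z - gaussianDensity σ 1 z
        = c * a * (1 - Real.exp (-t)) := by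
      simp only [gaussianDensity, hab, ← hcdef, ← hadef]; ring
    rw [hdiff, abs_of_nonneg (mul_nonneg (by positivity) (by linarith [Real.exp_le_one_iff.mpr (neg_nonpos.mpr ht)]))]
    have h1 : 1 - Real.exp (-t) ≤ t := one_sub_exp_neg_le t
    have h2 : t ≤ (1 - z) / σ ^ 2 := by
      rw [htdef, div_le_div_iff₀ (by positivity) hσ2]; nlinarith
    calc c * a * (1 - Real.exp (-t)) ≤ c * a * ((1 - z) / σ ^ 2) :=
          mul_le_mul_of_nonneg_left (le_trans h1 h2) (by positivity)
      _ = (1 - z) * gaussianDensity σ 0 z / σ ^ 2 := by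
          simp only [gaussianDensity, ← hcdef, ← hadef]; ring
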